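/- Let Φ be a symmetric gauge function on ℝ^d and let ‖A‖_Φ := Φ(λ(A)) be the associated unitarily invariant norm on symmetric positive definite matrices, where λ(A) is the vector of eigenvalues of A. Then ‖·‖_Φ is geodesically midpoint convex with respect to the affine-invariant geometry: for all positive definite A, B, one has ‖A # B‖_Φ ≤ (‖A‖_Φ + ‖B‖_Φ)/2, where A # B is the matrix geometric mean. -/

import Mathlib

/-- A symmetric gauge function on `ℝ^d`: a norm invariant under coordinate
permutations and sign changes of individual coordinates. -/
def IsSymmetricGauge {d : ℕ} (Φ : (Fin d → ℝ) → ℝ) : Prop :=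
  (∀ x, 0 ≤ Φ x) ∧
  (∀ x, Φ x = 0 ↔ x = 0) ∧
  (∀ (a : ℝ) (x : Fin d → ℝ), Φ (a • x) = |a| * Φ x) ∧
  (∀ x y : Fin d → ℝ, Φ (x + y) ≤ Φ x + Φ y) ∧
  (∀ (σ : Equiv.Perm (Fin d)) (x : Fin d → ℝ), Φ (x ∘ σ) = Φ x) ∧
  (∀ (ε : Fin d → ℝ), (∀ i, ε i = 1 ∨ ε i = -1) →
    ∀ x : Fin d → ℝ, Φ (fun i => ε i * x i) = Φ x)


open Matrix

/-- The positive semidefinite square root of a positive semidefinite matrix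
(removed from Mathlib; restored with its old definition). -/
noncomputable def Matrix.PosSemidef.sqrt {n 𝕜 : Type*} [Fintype n] [DecidableEq n] [RCLike 𝕜]
    [PartialOrder 𝕜] {A : Matrix n n 𝕜} (hA : A.PosSemidef) : Matrix n n 𝕜 :=
  hA.1.eigenvectorUnitary.1 * diagonal ((↑) ∘ (√·) ∘ hA.1.eigenvalues) *
  (star hA.1.eigenvectorUnitary : Matrix n n 𝕜)

/-- The matrix geometric mean `A # B = A^{1/2} (A^{-1/2} B A^{-1/2})^{1/2} A^{1/2}`. -/
noncomputable def geomMean {d : ℕ} {A B : Matrix (Fin d) (Fin d) ℝ}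
    (hA : A.PosDef) (hB : B.PosDef) : Matrix (Fin d) (Fin d) ℝ :=
  let S := hA.posSemidef.sqrt
  let h : ((S⁻¹)ᴴ * B * S⁻¹).PosSemidef :=
    hB.posSemidef.conjTranspose_mul_mul_same S⁻¹
  S * h.sqrt * S


lemma Matrix.PosSemidef.posSemidef_sqrt {d : ℕ} {A : Matrix (Fin d) (Fin d) ℝ}
    (hA : A.PosSemidef) : hA.sqrt.PosSemidef := by
  unfold Matrix.PosSemidef.sqrt
  have h := (posSemidef_diagonal_iff.2 (fun i => Real.sqrt_nonneg (hA.1.eigenvalues i)) :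
    (diagonal (fun i => √(hA.1.eigenvalues i))).PosSemidef).mul_mul_conjTranspose_same
    (hA.1.eigenvectorUnitary : Matrix (Fin d) (Fin d) ℝ)
  rw [← Matrix.star_eq_conjTranspose] at h
  exact h

lemma Matrix.PosSemidef.sqrt_mul_self {d : ℕ} {A : Matrix (Fin d) (Fin d) ℝ}
    (hA : A.PosSemidef) : hA.sqrt * hA.sqrt = A := by
  unfold Matrix.PosSemidef.sqrt
  conv_rhs => rw [hA.1.spectral_theorem, Unitary.conjStarAlgAut_apply]
  have hU : (star hA.1.eigenvectorUnitary : Matrix (Fin d) (Fin d) ℝ) *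
      (hA.1.eigenvectorUnitary : Matrix (Fin d) (Fin d) ℝ) = 1 :=
    Unitary.coe_star_mul_self _
  have hD : diagonal (RCLike.ofReal ∘ (√·) ∘ hA.1.eigenvalues) * diagonal (RCLike.ofReal ∘ (√·) ∘ hA.1.eigenvalues)
      = diagonal (RCLike.ofReal ∘ hA.1.eigenvalues : Fin d → ℝ) := by
    rw [diagonal_mul_diagonal]
    congr 1; funext i
    simp [Real.mul_self_sqrt (hA.eigenvalues_nonneg i)]
  calc _ = (hA.1.eigenvectorUnitary : Matrix (Fin d) (Fin d) ℝ) *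
        (diagonal (RCLike.ofReal ∘ (√·) ∘ hA.1.eigenvalues) * ((star hA.1.eigenvectorUnitary : Matrix (Fin d) (Fin d) ℝ) *
      (hA.1.eigenvectorUnitary : Matrix (Fin d) (Fin d) ℝ)) * diagonal (RCLike.ofReal ∘ (√·) ∘ hA.1.eigenvalues)) *
        (star hA.1.eigenvectorUnitary : Matrix (Fin d) (Fin d) ℝ) := by
          simp only [Matrix.mul_assoc]
    _ = _ := by rw [hU, Matrix.mul_one, hD, Matrix.mul_assoc]

namespace MidGeo

variable {d : ℕ}

variable {d : ℕ}

/-- Decreasing sorting permutation. -/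
noncomputable def dsPerm (x : Fin d → ℝ) : Equiv.Perm (Fin d) :=
  Tuple.sort (fun i => -x i)

/-- Decreasing rearrangement. -/
noncomputable def dsort (x : Fin d → ℝ) : Fin d → ℝ := fun i => x (dsPerm x i)

lemma dsort_antitone (x : Fin d → ℝ) : Antitone (dsort x) := by
  intro i j hij
  have h := Tuple.monotone_sort (fun i => -x i) hij
  simpa [dsort, dsPerm, neg_le_neg_iff] using h

/-- Extension of a `Fin d`-vector to `ℕ` by zero. -/
def extN (x : Fin d → ℝ) : ℕ → ℝ := fun n => if h : n < d then x ⟨n, h⟩ else 0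

lemma extN_coe (x : Fin d → ℝ) (i : Fin d) : extN x (i : ℕ) = x i := by
  simp [extN, i.isLt]

/-- Partial sums. -/
def psum (x : Fin d → ℝ) (k : ℕ) : ℝ := ∑ n ∈ Finset.range k, extN x n

lemma sum_univ_eq_sum_extN (x : Fin d → ℝ) : ∑ i, x i = ∑ n ∈ Finset.range d, extN x n := by
  rw [← Fin.sum_univ_eq_sum_range (extN x) d]
  exact Finset.sum_congr rfl fun i _ => (extN_coe x i).symm

lemma psum_eq_sum_castLE (x : Fin d → ℝ) {k : ℕ} (hk : k ≤ d) :
    psum x k = ∑ i : Fin k, x (Fin.castLE hk i) := by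
  rw [psum, ← Fin.sum_univ_eq_sum_range (extN x) k]
  refine Finset.sum_congr rfl fun i _ => ?_
  have hi : (i : ℕ) < d := lt_of_lt_of_le i.isLt hk
  simp [extN, hi, Fin.castLE]

/-- Abel summation identity. -/
lemma abel_id (x w : ℕ → ℝ) (N : ℕ) :
    ∑ n ∈ Finset.range N, x n * w n =
      (∑ n ∈ Finset.range N, (∑ i ∈ Finset.range (n + 1), x i) * (w n - w (n + 1)))
        + (∑ i ∈ Finset.range N, x i) * w N := by
  induction N with
  | zero => simp
  | succ N ih =>
      rw [Finset.sum_range_succ, Finset.sum_range_succ (fun n => (∑ i ∈ Finset.range (n+1), x i) * (w n - w (n+1))),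
        Finset.sum_range_succ x, ih]
      ring

lemma abel_le (N : ℕ) (a b w : ℕ → ℝ)
    (hw0 : ∀ n, n < N → 0 ≤ w n)
    (hwa : ∀ n, n + 1 < N → w (n + 1) ≤ w n)
    (hab : ∀ k, k ≤ N → (∑ n ∈ Finset.range k, a n) ≤ ∑ n ∈ Finset.range k, b n) :
    ∑ n ∈ Finset.range N, a n * w n ≤ ∑ n ∈ Finset.range N, b n * w n := by
  set w' : ℕ → ℝ := fun n => if n < N then w n else 0 with hw'
  have hrw : ∀ c : ℕ → ℝ, ∑ n ∈ Finset.range N, c n * w n = ∑ n ∈ Finset.range N, c n * w' n := by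
    intro c
    refine Finset.sum_congr rfl fun n hn => ?_
    rw [Finset.mem_range] at hn
    simp [hw', hn]
  rw [hrw a, hrw b, abel_id a w' N, abel_id b w' N]
  have hwN : w' N = 0 := by simp [hw']
  rw [hwN, mul_zero, mul_zero, add_zero, add_zero]
  refine Finset.sum_le_sum fun n hn => ?_
  rw [Finset.mem_range] at hn
  have hd : 0 ≤ w' n - w' (n + 1) := by
    by_cases h1 : n + 1 < N
    · simp only [hw', if_pos hn, if_pos h1, sub_nonneg]
      exact hwa n h1
    · simp only [hw', if_pos hn, if_neg h1, sub_zero]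
      exact hw0 n hn
  exact mul_le_mul_of_nonneg_right (hab (n + 1) hn) hd

/-- Rearrangement: pairing decreasing rearrangements maximizes the sum of products. -/
lemma sum_mul_le_sum_dsort (x w : Fin d → ℝ) :
    ∑ i, x i * w i ≤ ∑ i, dsort x i * dsort w i := by
  set σ := dsPerm x
  set τ := dsPerm w
  have hmono : Monovary (dsort x) (dsort w) := by
    intro i j hg
    rcases le_total j i with h | h
    · exact dsort_antitone x h
    · exact absurd (dsort_antitone w h) (not_le.2 hg)
  have h1 : ∑ i, x i * w i = ∑ j, dsort x j * dsort w ((σ.trans τ.symm) j) := by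
    rw [← Equiv.sum_comp σ (fun i => x i * w i)]
    refine Finset.sum_congr rfl fun j _ => ?_
    simp [dsort, σ, τ]
  rw [h1]
  exact hmono.sum_mul_comp_perm_le_sum_mul (σ := σ.trans τ.symm)


/-- Existence of a subgradient (norming functional) for a gauge. -/
lemma exists_subgradient (Φ : (Fin d → ℝ) → ℝ) (hΦ : IsSymmetricGauge Φ) (u : Fin d → ℝ) :
    ∃ g : (Fin d → ℝ) →ₗ[ℝ] ℝ, g u = Φ u ∧ ∀ z, g z ≤ Φ z := by
  obtain ⟨hpos, hdef, hhom, hadd, -, -⟩ := hΦ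
  have hΦ0 : Φ 0 = 0 := (hdef 0).2 rfl
  have N_hom : ∀ c : ℝ, 0 < c → ∀ x, Φ (c • x) = c * Φ x := by
    intro c hc x; rw [hhom, abs_of_pos hc]
  by_cases hu : u = 0
  · exact ⟨0, by simp [hu, hΦ0], fun z => hpos z⟩
  · set f : (Fin d → ℝ) →ₗ.[ℝ] ℝ := LinearPMap.mkSpanSingleton u (Φ u) hu with hf
    have hfapp : ∀ (c : ℝ) (h : c • u ∈ f.domain), f ⟨c • u, h⟩ = c * Φ u := by
      intro c h
      have := LinearPMap.mkSpanSingleton'_apply u (Φ u)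
        (fun a ha => by rw [smul_eq_zero] at ha ⊢; rcases ha with h | h
                        · exact Or.inl h
                        · exact absurd h hu) c h
      simpa [f, LinearPMap.mkSpanSingleton] using this
    have hfle : ∀ x : f.domain, f x ≤ Φ x := by
      rintro ⟨x, hx⟩
      obtain ⟨c, rfl⟩ := Submodule.mem_span_singleton.1 hx
      rw [hfapp c hx, hhom]
      exact mul_le_mul_of_nonneg_right (le_abs_self c) (hpos u)
    obtain ⟨g, hg1, hg2⟩ := exists_extension_of_le_sublinear f Φ N_hom hadd hfle
    refine ⟨g, ?_, hg2⟩
    have hmem : u ∈ f.domain := Submodule.mem_span_singleton_self u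
    have h2 := hg1 ⟨u, hmem⟩
    rw [h2]
    exact LinearPMap.mkSpanSingleton_apply ℝ ℝ hu (Φ u)

/-- Strong isotonicity: a symmetric gauge is monotone under weak submajorization. -/
lemma gauge_weakMaj (Φ : (Fin d → ℝ) → ℝ) (hΦ : IsSymmetricGauge Φ)
    (u v : Fin d → ℝ) (hu : ∀ i, 0 ≤ u i) (hv : Antitone v)
    (hmaj : ∀ k, k ≤ d → psum (dsort u) k ≤ psum v k) :
    Φ u ≤ Φ v := by
  obtain ⟨g, hgu, hgle⟩ := exists_subgradient Φ hΦ u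
  obtain ⟨hpos, hdef, hhom, hadd, hperm, hsign⟩ := hΦ
  set y : Fin d → ℝ := fun i => g (fun j => if i = j then 1 else 0) with hy
  have hgz : ∀ z : Fin d → ℝ, g z = ∑ i, z i * y i := by
    intro z
    conv_lhs => rw [pi_eq_sum_univ z]
    rw [map_sum]
    exact Finset.sum_congr rfl fun i _ => by rw [LinearMap.map_smul]; simp [hy]
  set ay : Fin d → ℝ := fun i => |y i| with hay
  set τ := dsPerm ay with hτ
  set w := dsort ay with hw
  have hw0 : ∀ i, 0 ≤ w i := fun i => abs_nonneg _
  -- step 1 : Φ u ≤ ∑ u i * |y i|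
  have step1 : Φ u ≤ ∑ i, u i * ay i := by
    rw [← hgu, hgz u]
    exact Finset.sum_le_sum fun i _ =>
      mul_le_mul_of_nonneg_left (le_abs_self (y i)) (hu i)
  -- step 2 : rearrangement
  have step2 : ∑ i, u i * ay i ≤ ∑ i, dsort u i * w i := sum_mul_le_sum_dsort u ay
  -- step 3 : Abel
  have step3 : ∑ i, dsort u i * w i ≤ ∑ i, v i * w i := by
    have hconv : ∀ x : Fin d → ℝ, ∑ i, x i * w i
        = ∑ n ∈ Finset.range d, extN x n * extN w n := by
      intro x
      rw [← Fin.sum_univ_eq_sum_range (fun n => extN x n * extN w n) d]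
      exact Finset.sum_congr rfl fun i _ => by rw [extN_coe, extN_coe]
    rw [hconv, hconv]
    refine abel_le d (extN (dsort u)) (extN v) (extN w) ?_ ?_ hmaj
    · intro n hn; simp only [extN, dif_pos hn]; exact hw0 _
    · intro n hn
      have hn' : n < d := Nat.lt_of_succ_lt hn
      simp only [extN, dif_pos hn, dif_pos hn']
      exact dsort_antitone ay (by simp [Fin.le_def])
  -- step 4 : duality
  have step4 : ∑ i, v i * w i ≤ Φ v := by
    set ε : Fin d → ℝ := fun j => if 0 ≤ y j then 1 else -1 with hε
    set z : Fin d → ℝ := fun j => ε j * (v ∘ ⇑τ.symm) j with hz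
    have hgzval : g z = ∑ i, v i * w i := by
      rw [hgz z]
      have h1 : ∀ j, z j * y j = (fun j => v (τ.symm j) * ay j) j := by
        intro j
        by_cases h : 0 ≤ y j
        · simp only [hz, hε, if_pos h, Function.comp_apply, hay, abs_of_nonneg h]; ring
        · simp only [hz, hε, if_neg h, Function.comp_apply, hay,
            abs_of_neg (not_le.1 h)]; ring
      rw [Finset.sum_congr rfl fun j _ => h1 j]
      rw [← Equiv.sum_comp τ (fun j => v (τ.symm j) * ay j)]
      exact Finset.sum_congr rfl fun i _ => by simp [hw, dsort, hτ]
    have hΦz : Φ z = Φ v := by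
      have h1 : Φ z = Φ (v ∘ ⇑τ.symm) := by
        rw [hz]
        exact hsign ε (fun i => by by_cases h : 0 ≤ y i <;> simp [hε, h]) (v ∘ ⇑τ.symm)
      rw [h1]
      exact hperm τ.symm v
    calc ∑ i, v i * w i = g z := hgzval.symm
      _ ≤ Φ z := hgle z
      _ = Φ v := hΦz
  exact le_trans step1 (le_trans step2 (le_trans step3 step4))

/-- LP bound: `∑ λ_m c_m ≤` sum of `k` largest entries of `λ` when `0 ≤ c ≤ 1`, `∑ c = k`. -/
lemma lp_bound (lam c : Fin d → ℝ) (k : ℕ) (hk : k ≤ d)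
    (hc0 : ∀ m, 0 ≤ c m) (hc1 : ∀ m, c m ≤ 1) (hsum : ∑ m, c m = k) :
    ∑ m, lam m * c m ≤ psum (dsort lam) k := by
  cases k with
  | zero =>
      have hc : ∀ m ∈ Finset.univ, c m = 0 := by
        rw [← Finset.sum_eq_zero_iff_of_nonneg (fun m _ => hc0 m)]
        simpa using hsum
      have : ∑ m, lam m * c m = 0 :=
        Finset.sum_eq_zero fun m hm => by rw [hc m hm, mul_zero]
      simp [this, psum]
  | succ k' =>
      set k := k' + 1
      have hk' : k' < d := lt_of_lt_of_le (Nat.lt_succ_self k') hk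
      set t := dsort lam ⟨k', hk'⟩ with ht
      have expand : ∑ m, lam m * c m = (∑ m, (lam m - t) * c m) + t * (k : ℝ) := by
        rw [← hsum, Finset.mul_sum, ← Finset.sum_add_distrib]
        exact Finset.sum_congr rfl fun m _ => by ring
      have step1 : ∑ m, (lam m - t) * c m ≤ ∑ m, max (lam m - t) 0 := by
        refine Finset.sum_le_sum fun m _ => ?_
        rcases le_or_gt 0 (lam m - t) with h | h
        · calc (lam m - t) * c m ≤ (lam m - t) * 1 :=
              mul_le_mul_of_nonneg_left (hc1 m) h
            _ ≤ max (lam m - t) 0 := by rw [mul_one]; exact le_max_left _ _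
        · calc (lam m - t) * c m ≤ 0 := mul_nonpos_of_nonpos_of_nonneg h.le (hc0 m)
            _ ≤ max (lam m - t) 0 := le_max_right _ _
      have step2 : ∑ m, max (lam m - t) 0 = ∑ m, max (dsort lam m - t) 0 := by
        rw [← Equiv.sum_comp (dsPerm lam) (fun m => max (lam m - t) 0)]
        rfl
      have step3 : ∑ m, max (dsort lam m - t) 0
          = ∑ i : Fin d, (if (i : ℕ) < k then dsort lam i - t else 0) := by
        refine Finset.sum_congr rfl fun i _ => ?_
        by_cases h : (i : ℕ) < k
        · rw [if_pos h]
          have hle : i ≤ (⟨k', hk'⟩ : Fin d) := by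
            rw [Fin.le_def]; exact Nat.lt_succ_iff.1 h
          have := dsort_antitone lam hle
          rw [max_eq_left (by rw [sub_nonneg]; exact this)]
        · rw [if_neg h]
          have hle : (⟨k', hk'⟩ : Fin d) ≤ i := by
            rw [Fin.le_def, Fin.val_mk]; omega
          have := dsort_antitone lam hle
          rw [max_eq_right (by rw [sub_nonpos]; exact this)]
      have step4 : ∑ i : Fin d, (if (i : ℕ) < k then dsort lam i - t else 0)
          = psum (dsort lam) k - t * k := by
        have h4a : ∑ i : Fin d, (if (i : ℕ) < k then dsort lam i - t else 0)
            = ∑ i : Fin d, (fun n => if n < k then extN (dsort lam) n - t else 0) (i : ℕ) := by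
          refine Finset.sum_congr rfl fun i _ => ?_
          by_cases h : (i : ℕ) < k <;> simp [h, extN_coe]
        rw [h4a, Fin.sum_univ_eq_sum_range (fun n => if n < k then extN (dsort lam) n - t else 0) d]
        rw [← Finset.sum_subset (Finset.range_subset_range.2 hk)
          (fun n _ hn => by rw [Finset.mem_range] at hn; rw [if_neg hn])]
        have h4b : (∑ n ∈ Finset.range k, if n < k then extN (dsort lam) n - t else 0)
            = ∑ n ∈ Finset.range k, (extN (dsort lam) n - t) :=
          Finset.sum_congr rfl fun n hn => by
            rw [Finset.mem_range] at hn; rw [if_pos hn]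
        rw [h4b, Finset.sum_sub_distrib, Finset.sum_const, Finset.card_range, psum]
        push_cast; ring
      calc ∑ m, lam m * c m = (∑ m, (lam m - t) * c m) + t * (k:ℝ) := expand
        _ ≤ (∑ m, max (lam m - t) 0) + t * k := by linarith [step1]
        _ = (psum (dsort lam) k - t * k) + t * k := by rw [step2, step3, step4]
        _ = psum (dsort lam) k := by ring

lemma psd_diag_nonneg {M : Matrix (Fin d) (Fin d) ℝ} (hM : M.PosSemidef) (j : Fin d) :
    0 ≤ M j j := by
  exact hM.diag_nonneg

/-- Ky Fan-type bound: partial diagonal sums of `Uᴴ H U` over a set `J` are bounded by the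
sum of the `|J|` largest eigenvalues of `H`. -/
lemma kyfan_bound {H : Matrix (Fin d) (Fin d) ℝ} (hH : H.IsHermitian)
    {U : Matrix (Fin d) (Fin d) ℝ} (hU : U ∈ Matrix.unitaryGroup (Fin d) ℝ)
    (J : Finset (Fin d)) :
    ∑ j ∈ J, (Uᴴ * H * U) j j ≤ psum (dsort hH.eigenvalues) J.card := by
  have hJd : J.card ≤ d := by
    simpa using Finset.card_le_univ J
  set lam := hH.eigenvalues with hlam
  set V : Matrix (Fin d) (Fin d) ℝ := (hH.eigenvectorUnitary : Matrix (Fin d) (Fin d) ℝ) with hV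
  set W : Matrix (Fin d) (Fin d) ℝ := Vᴴ * U with hW
  have hVmem : V ∈ Matrix.unitaryGroup (Fin d) ℝ := SetLike.coe_mem _
  have hV1 : V * Vᴴ = 1 := by
    have := (Matrix.mem_unitaryGroup_iff).1 hVmem
    rwa [Matrix.star_eq_conjTranspose] at this
  have hV1' : Vᴴ * V = 1 := by
    have := (Matrix.mem_unitaryGroup_iff').1 hVmem
    rwa [Matrix.star_eq_conjTranspose] at this
  have hU1 : U * Uᴴ = 1 := by
    have := (Matrix.mem_unitaryGroup_iff).1 hU
    rwa [Matrix.star_eq_conjTranspose] at this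
  have hU1' : Uᴴ * U = 1 := by
    have := (Matrix.mem_unitaryGroup_iff').1 hU
    rwa [Matrix.star_eq_conjTranspose] at this
  have hWW : Wᴴ * W = 1 := by
    rw [hW, Matrix.conjTranspose_mul, Matrix.conjTranspose_conjTranspose]
    calc Uᴴ * V * (Vᴴ * U) = Uᴴ * (V * Vᴴ) * U := by
          simp only [Matrix.mul_assoc]
      _ = 1 := by rw [hV1, Matrix.mul_one, hU1']
  have hWW' : W * Wᴴ = 1 := by
    rw [hW, Matrix.conjTranspose_mul, Matrix.conjTranspose_conjTranspose]
    calc Vᴴ * U * (Uᴴ * V) = Vᴴ * (U * Uᴴ) * V := by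
          simp only [Matrix.mul_assoc]
      _ = 1 := by rw [hU1, Matrix.mul_one, hV1']
  have hspec : H = V * Matrix.diagonal lam * Vᴴ := by
    have := hH.spectral_theorem
    rwa [Unitary.conjStarAlgAut_apply, RCLike.ofReal_real_eq_id, Function.id_comp, Matrix.star_eq_conjTranspose] at this
  have hUHU : Uᴴ * H * U = Wᴴ * Matrix.diagonal lam * W := by
    rw [hspec, hW, Matrix.conjTranspose_mul, Matrix.conjTranspose_conjTranspose]
    simp only [Matrix.mul_assoc]
  have hentry : ∀ j, (Uᴴ * H * U) j j = ∑ m, lam m * (W m j) ^ 2 := by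
    intro j
    rw [hUHU, Matrix.mul_apply]
    refine Finset.sum_congr rfl fun m _ => ?_
    rw [Matrix.mul_diagonal, Matrix.conjTranspose_apply, star_trivial]
    ring
  set c : Fin d → ℝ := fun m => ∑ j ∈ J, (W m j) ^ 2 with hc
  have hswap : ∑ j ∈ J, (Uᴴ * H * U) j j = ∑ m, lam m * c m := by
    rw [Finset.sum_congr rfl fun j _ => hentry j, Finset.sum_comm]
    exact Finset.sum_congr rfl fun m _ => by rw [hc, Finset.mul_sum]
  have hc0 : ∀ m, 0 ≤ c m := fun m => Finset.sum_nonneg fun j _ => sq_nonneg _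
  have hc1 : ∀ m, c m ≤ 1 := by
    intro m
    have h1 : c m ≤ ∑ j, (W m j) ^ 2 :=
      Finset.sum_le_sum_of_subset_of_nonneg (Finset.subset_univ J)
        (fun j _ _ => sq_nonneg _)
    have h2 : ∑ j, (W m j) ^ 2 = (W * Wᴴ) m m := by
      rw [Matrix.mul_apply]
      exact Finset.sum_congr rfl fun j _ => by
        rw [Matrix.conjTranspose_apply, star_trivial]; ring
    rw [h2, hWW'] at h1
    simpa using h1
  have hcsum : ∑ m, c m = (J.card : ℝ) := by
    rw [Finset.sum_comm]
    have : ∀ j ∈ J, ∑ m, (W m j) ^ 2 = 1 := by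
      intro j _
      have h2 : ∑ m, (W m j) ^ 2 = (Wᴴ * W) j j := by
        rw [Matrix.mul_apply]
        exact Finset.sum_congr rfl fun m _ => by
          rw [Matrix.conjTranspose_apply, star_trivial]; ring
      rw [h2, hWW]
      simp
    rw [Finset.sum_congr rfl this]
    simp
  rw [hswap]
  exact lp_bound lam c J.card hJd hc0 hc1 hcsum

end MidGeo

/-- Geodesic midpoint convexity of the unitarily invariant norm
`‖A‖_Φ = Φ(λ(A))` associated to a symmetric gauge function `Φ`:
`‖A # B‖_Φ ≤ (‖A‖_Φ + ‖B‖_Φ)/2`. -/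
theorem unitarilyInvariantNorm_geodesically_midpoint_convex {d : ℕ}
    (Φ : (Fin d → ℝ) → ℝ) (hΦ : IsSymmetricGauge Φ)
    {A B : Matrix (Fin d) (Fin d) ℝ} (hA : A.PosDef) (hB : B.PosDef)
    (hG : (geomMean hA hB).IsHermitian) :
    Φ (hG.eigenvalues) ≤
      (Φ (hA.isHermitian.eigenvalues) + Φ (hB.isHermitian.eigenvalues)) / 2 := by
  classical
  open MidGeo in
  have hpos := hΦ.1
  have hhom := hΦ.2.2.1
  have hadd := hΦ.2.2.2.1
  have hperm := hΦ.2.2.2.2.1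
  set S := hA.posSemidef.sqrt with hSdef
  set C := (S⁻¹)ᴴ * B * S⁻¹ with hCdef
  have hC : C.PosSemidef := hB.posSemidef.conjTranspose_mul_mul_same S⁻¹
  set T := hC.sqrt with hTdef
  set G := geomMean hA hB with hGdefn
  have hGeq : G = S * T * S := rfl
  have hSH : S.IsHermitian := hA.posSemidef.posSemidef_sqrt.1
  have hSS : S * S = A := hA.posSemidef.sqrt_mul_self
  have hTH : T.IsHermitian := hC.posSemidef_sqrt.1
  have hTT : T * T = C := hC.sqrt_mul_self
  have hdet : IsUnit S.det := by
    refine isUnit_iff_ne_zero.2 fun h => ?_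
    have h1 : S.det * S.det = A.det := by rw [← Matrix.det_mul, hSS]
    have h2 : 0 < A.det := hA.det_pos
    rw [h, mul_zero] at h1
    rw [← h1] at h2
    exact lt_irrefl 0 h2
  have hSinv : (S⁻¹)ᴴ = S⁻¹ := by
    rw [Matrix.conjTranspose_nonsing_inv, hSH.eq]
  have hB' : S * C * S = B := by
    rw [hCdef, hSinv]
    calc S * (S⁻¹ * B * S⁻¹) * S = (S * S⁻¹) * B * (S⁻¹ * S) := by
          simp only [Matrix.mul_assoc]
      _ = B := by
          rw [Matrix.mul_nonsing_inv _ hdet, Matrix.nonsing_inv_mul _ hdet, one_mul,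
            Matrix.mul_one]
  have hXX : ((1 - T) * S)ᴴ * ((1 - T) * S) = A + B - (G + G) := by
    rw [Matrix.conjTranspose_mul, Matrix.conjTranspose_sub, Matrix.conjTranspose_one,
      hTH.eq, hSH.eq, hGeq, ← hSS, ← hB', ← hTT]
    noncomm_ring
  have hD : (A + B - (G + G)).PosSemidef := hXX ▸ Matrix.posSemidef_conjTranspose_mul_self _
  have hGpsd : G.PosSemidef := by
    have h := hC.posSemidef_sqrt.mul_mul_conjTranspose_same S
    rw [hSH.eq] at h
    rw [hGeq]
    exact h
  set u := hG.eigenvalues with hu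
  set a := hA.isHermitian.eigenvalues with ha
  set b := hB.isHermitian.eigenvalues with hb
  have hu0 : ∀ i, 0 ≤ u i := fun i => hGpsd.eigenvalues_nonneg i
  set U : Matrix (Fin d) (Fin d) ℝ := (hG.eigenvectorUnitary : Matrix (Fin d) (Fin d) ℝ)
    with hU
  have hUmem : U ∈ Matrix.unitaryGroup (Fin d) ℝ := SetLike.coe_mem _
  have hdiag : Uᴴ * G * U = Matrix.diagonal u := by
    have h := hG.conjStarAlgAut_star_eigenvectorUnitary
    rwa [Unitary.conjStarAlgAut_star_apply, RCLike.ofReal_real_eq_id, Function.id_comp, Matrix.star_eq_conjTranspose] at h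
  set v : Fin d → ℝ := fun i => (dsort a i + dsort b i) / 2 with hv
  have hvpsum : ∀ k, psum v k = (psum (dsort a) k + psum (dsort b) k) / 2 := by
    intro k
    have hve : ∀ n, extN v n = (extN (dsort a) n + extN (dsort b) n) / 2 := by
      intro n
      by_cases h : n < d <;> simp [extN, h, hv]
    simp only [psum]
    rw [Finset.sum_congr rfl fun n _ => hve n, ← Finset.sum_div, Finset.sum_add_distrib]
  have hmaj : ∀ k, k ≤ d → psum (dsort u) k ≤ psum v k := by
    intro k hk
    set σ := dsPerm u with hσ
    set jm : Fin k → Fin d := fun i => σ (Fin.castLE hk i) with hjm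
    have hinj : Function.Injective jm := fun i j h =>
      Fin.castLE_injective hk (σ.injective h)
    set J : Finset (Fin d) := Finset.image jm Finset.univ with hJ
    have hcard : J.card = k := by
      rw [hJ, Finset.card_image_of_injective _ hinj, Finset.card_univ, Fintype.card_fin]
    have h1 : psum (dsort u) k = ∑ j ∈ J, u j := by
      rw [psum_eq_sum_castLE (dsort u) hk, hJ,
        Finset.sum_image (fun i _ j _ h => hinj h)]
      rfl
    have hDU : (Uᴴ * (A + B - (G + G)) * U).PosSemidef := hD.conjTranspose_mul_mul_same U
    have hexp : Uᴴ * (A + B - (G + G)) * U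
        = Uᴴ * A * U + Uᴴ * B * U - (Uᴴ * G * U + Uᴴ * G * U) := by
      noncomm_ring
    have h3 : ∑ j ∈ J, u j + ∑ j ∈ J, u j
        ≤ ∑ j ∈ J, (Uᴴ * A * U) j j + ∑ j ∈ J, (Uᴴ * B * U) j j := by
      have hsum0 : 0 ≤ ∑ j ∈ J, (Uᴴ * (A + B - (G + G)) * U) j j :=
        Finset.sum_nonneg fun j _ => psd_diag_nonneg hDU j
      have hterm : ∀ j, (Uᴴ * (A + B - (G + G)) * U) j j
          = (Uᴴ * A * U) j j + (Uᴴ * B * U) j j - (u j + u j) := by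
        intro j
        rw [hexp, Matrix.sub_apply, Matrix.add_apply, Matrix.add_apply, hdiag,
          Matrix.diagonal_apply_eq]
      rw [Finset.sum_congr rfl fun j _ => hterm j] at hsum0
      rw [Finset.sum_sub_distrib, Finset.sum_add_distrib, Finset.sum_add_distrib] at hsum0
      linarith
    have h4 := kyfan_bound hA.isHermitian hUmem J
    have h5 := kyfan_bound hB.isHermitian hUmem J
    rw [hcard] at h4 h5
    rw [h1, hvpsum k]
    linarith
  have hva : Antitone v := by
    intro i j hij
    have h1 := dsort_antitone a hij
    have h2 := dsort_antitone b hij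
    simp only [hv]
    linarith
  have main := gauge_weakMaj Φ hΦ u v hu0 hva hmaj
  have hlast : Φ v ≤ (Φ a + Φ b) / 2 := by
    have hveq : v = (2⁻¹ : ℝ) • (dsort a + dsort b) := by
      funext i
      simp only [hv, Pi.smul_apply, Pi.add_apply, smul_eq_mul]
      ring
    have hda : Φ (dsort a) = Φ a := hperm (dsPerm a) a
    have hdb : Φ (dsort b) = Φ b := hperm (dsPerm b) b
    calc Φ v = |(2⁻¹ : ℝ)| * Φ (dsort a + dsort b) := by rw [hveq, hhom]
      _ ≤ |(2⁻¹ : ℝ)| * (Φ (dsort a) + Φ (dsort b)) := by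
          refine mul_le_mul_of_nonneg_left (hadd _ _) (abs_nonneg _)
      _ = (Φ a + Φ b) / 2 := by rw [hda, hdb, abs_of_pos (by norm_num : (0:ℝ) < 2⁻¹)]; ring
  exact le_trans main hlast
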